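/- Solution of the Blissard problem: given a sequence a = (1, a₁, a₂, ...) with a₀ = 1, the unique sequence b = (b₀, b₁, b₂, ...) with b₀ = 1 such that the Cauchy product of the exponential generating functions ∑ a_k t^k/k! and ∑ b_k t^k/k! is identically 1 is given by b_n = Y_n(-1!, a₁; 2!, a₂; -3!, a₃; ...; (-1)^n n!, a_n) = ∑_{k=1}^n (-1)^k k! B_{n,k}(a₁,...,a_{n-k+1}) for n ≥ 1. -/

import Mathlib

/-- Partial (exponential) Bell polynomials `B_{n,k}(g₁, g₂, …)`, defined by the recursion
`B_{n,k} = ∑_{h=0}^{n-k} C(n-1,h) B_{n-h-1,k-1} g_{h+1}`, with `B_{0,0} = 1` and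
`B_{n,0} = 0` for `n ≥ 1` (and `B_{0,k} = 0` for `k ≥ 1`). -/
def bellB : ℕ → ℕ → (ℕ → ℝ) → ℝ
  | 0, 0, _ => 1
  | _+1, 0, _ => 0
  | 0, _+1, _ => 0
  | n+1, k+1, g => ∑ h ∈ Finset.range (n + 1 - k), (n.choose h : ℝ) * bellB (n - h) k g * g (h + 1)
  termination_by n _ _ => n
  decreasing_by omega


/-- The complete Bell polynomial `Y_n(f₁,g₁;…;f_n,g_n) = ∑_{k=1}^n B_{n,k}(g₁,…) f_k`. -/
def bellY (n : ℕ) (f g : ℕ → ℝ) : ℝ := ∑ k ∈ Finset.Icc 1 n, bellB n k g * f k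

open PowerSeries Finset

lemma bellB_zero_of_lt (g : ℕ → ℝ) : ∀ n k : ℕ, n < k → bellB n k g = 0 := by
  intro n
  induction n using Nat.strong_induction_on with
  | _ n ih =>
    intro k hk
    match n, k with
    | 0, k+1 => rw [bellB]
    | n+1, k+1 =>
      rw [bellB]
      apply Finset.sum_eq_zero
      intro h hh
      simp only [Finset.mem_range] at hh
      rw [ih (n - h) (by omega) k (by omega)]
      ring

lemma bellB_succ_succ' (n k : ℕ) (g : ℕ → ℝ) : bellB (n+1) (k+1) g
    = ∑ h ∈ Finset.range (n+1), (n.choose h : ℝ) * bellB (n - h) k g * g (h + 1) := by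
  rw [bellB]
  apply Finset.sum_subset
  · intro x hx; simp only [mem_range] at *; omega
  · intro x hx hx'
    simp only [mem_range] at hx hx'
    rw [bellB_zero_of_lt g (n-x) k (by omega)]
    ring

/-- The exponential generating function of a sequence. -/
noncomputable def egf (f : ℕ → ℝ) : PowerSeries ℝ := PowerSeries.mk fun n => f n / n.factorial

lemma keyC (a : ℕ → ℝ) (ha0 : a 0 = 1) : ∀ k : ℕ,
    (egf a - 1) ^ k = PowerSeries.mk fun n => k.factorial * bellB n k a / n.factorial := by
  intro k
  induction k with
  | zero =>
    ext n
    rw [pow_zero, coeff_mk]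
    cases n with
    | zero => simp [show bellB 0 0 a = 1 by rw [bellB]]
    | succ n => simp [show bellB (n+1) 0 a = 0 by rw [bellB], coeff_one]
  | succ k ih =>
    apply PowerSeries.derivative.ext (R := ℝ)
    · have hd : (d⁄dX ℝ) (egf a - 1) = PowerSeries.mk fun n => a (n+1) / n.factorial := by
        ext m
        rw [coeff_derivative, coeff_mk]
        simp only [map_sub, egf, coeff_mk, PowerSeries.coeff_one]
        rcases Nat.eq_zero_or_pos m with hm | hm
        · subst hm; simp [Nat.factorial_succ]
        · rw [if_neg (by omega), Nat.factorial_succ]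
          push_cast
          field_simp
          ring
      rw [Derivation.leibniz_pow, Nat.add_sub_cancel, smul_eq_mul, hd, ih]
      ext n
      rw [map_nsmul, coeff_derivative, coeff_mk, coeff_mul,
        Finset.Nat.sum_antidiagonal_eq_sum_range_succ_mk]
      simp only [coeff_mk]
      rw [← Finset.sum_range_reflect]
      simp only [Nat.succ_sub_one]
      rw [bellB_succ_succ', nsmul_eq_mul, Finset.mul_sum, Finset.mul_sum, Finset.sum_div,
        Finset.sum_mul]
      apply Finset.sum_congr rfl
      intro h hh
      simp only [mem_range] at hh
      have h1 : h ≤ n := by omega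
      rw [Nat.sub_sub_self h1]
      have hc : ((n.choose h : ℝ)) * h.factorial * (n-h).factorial = n.factorial := by
        exact_mod_cast congrArg (Nat.cast (R := ℝ)) (Nat.choose_mul_factorial_mul_factorial h1)
      have f1 : (h.factorial : ℝ) ≠ 0 := Nat.cast_ne_zero.2 (Nat.factorial_ne_zero h)
      have f2 : ((n-h).factorial : ℝ) ≠ 0 := Nat.cast_ne_zero.2 (Nat.factorial_ne_zero _)
      have hC : (n.choose h : ℝ) = n.factorial / (h.factorial * (n-h).factorial) := by
        rw [eq_div_iff (by exact mul_ne_zero f1 f2)]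
        linear_combination hc
      rw [hC, Nat.factorial_succ k, Nat.factorial_succ n]
      push_cast
      field_simp
    · rw [map_pow]
      have h0 : PowerSeries.constantCoeff (egf a - 1) = 0 := by
        simp [egf, ha0]
      rw [h0, zero_pow (Nat.succ_ne_zero k)]
      simp [show ∀ k : ℕ, bellB 0 (k+1) a = 0 from fun k => by rw [bellB]]

/-- The candidate inverse sequence. -/
noncomputable def Ytil (a : ℕ → ℝ) (n : ℕ) : ℝ :=
  ∑ k ∈ Finset.range (n+1), (-1 : ℝ)^k * k.factorial * bellB n k a

lemma hrecY (a : ℕ → ℝ) (ha0 : a 0 = 1) (n : ℕ) (hn : 1 ≤ n) :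
    ∑ j ∈ Finset.range (n+1), (n.choose j : ℝ) * a j * Ytil a (n-j) = 0 := by
  have hG : egf a * (∑ k ∈ range (n+1), (1 - egf a)^k) = 1 - (1 - egf a)^(n+1) := by
    have h := geom_sum_mul (1 - egf a) (n+1)
    linear_combination -h
  have hco : ∀ j, PowerSeries.coeff j (∑ k ∈ range (n+1), (1 - egf a)^k)
      = (∑ k ∈ range (n+1), (-1:ℝ)^k * k.factorial * bellB j k a) / j.factorial := by
    intro j
    rw [map_sum, Finset.sum_div]
    apply Finset.sum_congr rfl
    intro k hk
    rw [show (1 : PowerSeries ℝ) - egf a = (-1 : ℝ) • (egf a - 1) by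
      rw [neg_smul, one_smul]; ring, smul_pow, map_smul, keyC a ha0 k]
    simp only [coeff_mk, smul_eq_mul]
    ring
  have hco2 : ∀ j ≤ n, PowerSeries.coeff j (∑ k ∈ range (n+1), (1 - egf a)^k)
      = Ytil a j / j.factorial := by
    intro j hj
    rw [hco j, Ytil]
    congr 1
    symm
    apply Finset.sum_subset
    · intro x hx; simp only [mem_range] at *; omega
    · intro x hx hx'
      simp only [mem_range] at hx hx'
      rw [bellB_zero_of_lt a j x (by omega)]
      ring
  have hz : PowerSeries.coeff n (egf a * (∑ k ∈ range (n+1), (1 - egf a)^k)) = 0 := by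
    rw [hG, map_sub, show (1 : PowerSeries ℝ) - egf a = (-1 : ℝ) • (egf a - 1) by
      rw [neg_smul, one_smul]; ring, smul_pow, map_smul, keyC a ha0 (n+1)]
    simp only [coeff_mk, smul_eq_mul, PowerSeries.coeff_one]
    rw [bellB_zero_of_lt a n (n+1) (by omega), if_neg (by omega)]
    ring
  rw [PowerSeries.coeff_mul, Finset.Nat.sum_antidiagonal_eq_sum_range_succ_mk] at hz
  have key : ∑ j ∈ range (n+1), (n.choose j : ℝ) * a j * Ytil a (n-j)
      = n.factorial * ∑ j ∈ range (n+1),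
        (PowerSeries.coeff j (egf a)) * (PowerSeries.coeff (n-j) (∑ k ∈ range (n+1), (1 - egf a)^k)) := by
    rw [Finset.mul_sum]
    apply Finset.sum_congr rfl
    intro j hj
    simp only [mem_range] at hj
    have h1 : j ≤ n := by omega
    rw [hco2 (n-j) (by omega)]
    simp only [egf, coeff_mk]
    have hc : ((n.choose j : ℝ)) * j.factorial * (n-j).factorial = n.factorial := by
      exact_mod_cast congrArg (Nat.cast (R := ℝ)) (Nat.choose_mul_factorial_mul_factorial h1)
    have f1 : (j.factorial : ℝ) ≠ 0 := Nat.cast_ne_zero.2 (Nat.factorial_ne_zero j)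
    have f2 : ((n-j).factorial : ℝ) ≠ 0 := Nat.cast_ne_zero.2 (Nat.factorial_ne_zero _)
    have hC : (n.choose j : ℝ) = n.factorial / (j.factorial * (n-j).factorial) := by
      rw [eq_div_iff (by exact mul_ne_zero f1 f2)]
      linear_combination hc
    rw [hC]
    field_simp
  rw [key, hz, mul_zero]

/-- Solution of the Blissard problem: the unique sequence `b` with `b₀ = 1` whose
exponential generating function is the reciprocal of that of `a` is given by
`b_n = Y_n(-1!, a₁; 2!, a₂; …; (-1)^n n!, a_n)`. -/
theorem blissard_solution (a b : ℕ → ℝ) (ha0 : a 0 = 1) (hb0 : b 0 = 1)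
    (hab : ∀ n : ℕ, 1 ≤ n → ∑ k ∈ Finset.range (n + 1), (n.choose k : ℝ) * a k * b (n - k) = 0) :
    ∀ n : ℕ, 1 ≤ n →
      b n = bellY n (fun k => (-1 : ℝ) ^ k * k.factorial) a ∧
      b n = ∑ k ∈ Finset.Icc 1 n, (-1 : ℝ) ^ k * k.factorial * bellB n k a := by
  have hbY : ∀ n, b n = Ytil a n := by
    intro n
    induction n using Nat.strong_induction_on with
    | _ n ih =>
      match n with
      | 0 => rw [hb0]; simp [Ytil, show bellB 0 0 a = 1 by rw [bellB]]
      | m+1 =>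
        have h1 := hab (m+1) (by omega)
        have h2 := hrecY a ha0 (m+1) (by omega)
        rw [Finset.sum_range_succ'] at h1 h2
        simp only [Nat.choose_zero_right, Nat.cast_one, ha0, one_mul, Nat.sub_zero] at h1 h2
        have hcong : ∀ i ∈ range (m+1),
            (((m+1).choose (i+1) : ℝ)) * a (i+1) * b (m+1-(i+1))
              = ((m+1).choose (i+1) : ℝ) * a (i+1) * Ytil a (m+1-(i+1)) := by
          intro i hi
          rw [ih (m+1-(i+1)) (by omega)]
        rw [Finset.sum_congr rfl hcong] at h1
        linarith
  have hsplit : ∀ n : ℕ, 1 ≤ n →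
      Ytil a n = ∑ k ∈ Finset.Icc 1 n, (-1 : ℝ)^k * k.factorial * bellB n k a := by
    intro n hn
    rw [Ytil, show range (n+1) = insert 0 (Finset.Icc 1 n) by
      ext x; simp only [mem_range, Finset.mem_insert, Finset.mem_Icc]; omega,
      Finset.sum_insert (by simp)]
    obtain ⟨m, rfl⟩ : ∃ m, n = m+1 := ⟨n-1, by omega⟩
    rw [show bellB (m+1) 0 a = 0 by rw [bellB]]
    simp
  intro n hn
  refine ⟨?_, ?_⟩
  · rw [hbY n, hsplit n hn, bellY]
    apply Finset.sum_congr rfl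
    intro k hk
    ring
  · rw [hbY n, hsplit n hn]
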